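/- arXiv:1110.3098 — 3 statements merged into one kernel-verified Lean document; each statement's English description precedes it below -/
import Mathlib

section
/- For every q ∈ ℕ and every x ≥ 0, the Laguerre polynomial L_q satisfies |e^{-x/2} L_q(x)| ≤ 1. -/
open Real

/-- The `q`-th Laguerre polynomial `L_q(t) = Σ_{k=0}^q (q choose k) (-t)^k / k!`. -/
noncomputable def laguerre (q : ℕ) (t : ℝ) : ℝ :=
  ∑ k ∈ Finset.range (q + 1), (q.choose k : ℝ) * (-t) ^ k / (k.factorial : ℝ)

open Polynomial MeasureTheory

noncomputable def Hp (n : ℕ) : Polynomial ℝ := (Polynomial.hermite n).map (Int.castRingHom ℝ)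

noncomputable def gss (s : ℝ) : ℝ := Real.exp (-(s^2/2))

lemma Hp_zero : Hp 0 = 1 := by simp [Hp, hermite_zero]

lemma Hp_succ (n : ℕ) : Hp (n+1) = X * Hp n - derivative (Hp n) := by
  rw [Hp, hermite_succ, Polynomial.map_sub, Polynomial.map_mul, Polynomial.map_X,
    ← derivative_map]
  rfl

lemma natDegree_Hp (n : ℕ) : (Hp n).natDegree = n := by
  rw [Hp, natDegree_map_eq_of_injective (f := Int.castRingHom ℝ)
    (fun a b h => by simpa using h), Polynomial.natDegree_hermite]

lemma derivative_Hp (n : ℕ) : derivative (Hp (n+1)) = ((n : ℝ) + 1) • Hp n := by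
  induction n with
  | zero => simp [Hp_succ, Hp_zero]
  | succ n ih =>
    rw [Hp_succ (n+1), derivative_sub, derivative_mul, derivative_X, one_mul, ih]
    rw [show derivative ((↑n + 1 : ℝ) • Hp n) = ((n:ℝ)+1) • derivative (Hp n) from derivative_smul _ _]
    rw [mul_smul_comm, add_sub_assoc, ← smul_sub, ← Hp_succ]
    push_cast
    module

lemma iterate_derivative_Hp (k : ℕ) : ∀ n : ℕ,
    derivative^[k] (Hp (n + k)) = (((n+k).descFactorial k : ℕ) : ℝ) • Hp n := by
  induction k with
  | zero => intro n; simp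
  | succ k ih =>
    intro n
    rw [Function.iterate_succ_apply', show n + (k+1) = (n+1) + k by ring, ih (n+1),
      derivative_smul, derivative_Hp, smul_smul, Nat.descFactorial_succ]
    congr 1
    push_cast [show n + 1 + k - k = n + 1 by omega]
    ring

lemma iterate_derivative_Hp_self (k : ℕ) :
    derivative^[k] (Hp k) = ((k.factorial : ℕ) : ℝ) • 1 := by
  have := iterate_derivative_Hp k 0
  simpa [Hp_zero, Nat.descFactorial_self] using this

lemma iterate_derivative_Hp_lt {j k : ℕ} (h : j < k) : derivative^[k] (Hp j) = 0 :=
  iterate_derivative_eq_zero (by rw [natDegree_Hp]; exact h)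

lemma hasseDeriv_Hp (k n : ℕ) :
    hasseDeriv k (Hp n) = ((n.choose k : ℕ) : ℝ) • Hp (n - k) := by
  have hfact : (k.factorial : ℝ) ≠ 0 := by exact_mod_cast k.factorial_ne_zero
  apply smul_right_injective (Polynomial ℝ) hfact
  have h1 : (k.factorial : ℝ) • hasseDeriv k (Hp n) = derivative^[k] (Hp n) := by
    have := Polynomial.factorial_smul_hasseDeriv (R := ℝ) k
    have h2 := congrFun this (Hp n)
    simp only [LinearMap.smul_apply] at h2
    rw [← h2, Nat.cast_smul_eq_nsmul]
  show (k.factorial : ℝ) • _ = (k.factorial : ℝ) • _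
  rw [h1]
  rcases le_or_gt k n with h | h
  · have := iterate_derivative_Hp k (n - k)
    rw [Nat.sub_add_cancel h] at this
    rw [this, smul_smul, Nat.descFactorial_eq_factorial_mul_choose]
    push_cast
    ring_nf
  · rw [iterate_derivative_Hp_lt h, Nat.choose_eq_zero_of_lt h]
    simp

lemma add_formula (q : ℕ) (s c : ℝ) :
    eval (s + c) (Hp q) =
      ∑ i ∈ Finset.range (q + 1), (q.choose i : ℝ) * (eval s (Hp (q - i)) * c ^ i) := by
  have h1 : eval (s + c) (Hp q) = eval c (taylor s (Hp q)) := by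
    rw [taylor_eval, add_comm]
  rw [h1, eval_eq_sum_range, natDegree_taylor, natDegree_Hp]
  refine Finset.sum_congr rfl fun i _ => ?_
  rw [taylor_coeff, hasseDeriv_Hp, eval_smul]
  simp [mul_assoc]

lemma pow_mul_exp_bound (n : ℕ) (s : ℝ) :
    |s| ^ n * Real.exp (-(s^2/4)) ≤ 4 ^ n * n.factorial := by
  have hfac : (1 : ℝ) ≤ 4 ^ n * n.factorial := by
    have h1 : (1:ℝ) ≤ 4 ^ n := one_le_pow₀ (by norm_num)
    have h2 : (1:ℝ) ≤ n.factorial := by exact_mod_cast n.factorial_pos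
    nlinarith
  rcases le_or_gt (|s|) 1 with h | h
  · have h1 : |s| ^ n ≤ 1 := pow_le_one₀ (abs_nonneg s) h
    have h2 : Real.exp (-(s^2/4)) ≤ 1 := by
      rw [Real.exp_le_one_iff]; nlinarith [sq_nonneg s]
    nlinarith [pow_nonneg (abs_nonneg s) n, Real.exp_pos (-(s^2/4))]
  · have hs1 : (1:ℝ) ≤ |s| := h.le
    have h0 : (0:ℝ) ≤ s^2/4 := by positivity
    have h1 : (s^2/4) ^ n / n.factorial ≤ Real.exp (s^2/4) := by
      calc (s^2/4) ^ n / n.factorial ≤ ∑ i ∈ Finset.range (n+1), (s^2/4) ^ i / i.factorial := by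
            exact Finset.single_le_sum (f := fun i => (s^2/4)^i / (i.factorial:ℝ))
              (fun i _ => by positivity) (Finset.self_mem_range_succ n)
        _ ≤ Real.exp (s^2/4) := Real.sum_le_exp_of_nonneg h0 (n+1)
    have h2 : (s^2/4) ^ n = |s| ^ (2*n) / 4 ^ n := by
      rw [div_pow, ← pow_mul, mul_comm 2 n, pow_mul, pow_mul, ← abs_pow, sq_abs]
    rw [h2] at h1
    have key : |s| ^ (2*n) / (4 ^ n * n.factorial) ≤ Real.exp (s^2/4) := by
      rwa [div_div] at h1
    have hpos : (0:ℝ) < Real.exp (s^2/4) := Real.exp_pos _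
    have h4 : |s| ^ (2*n) ≤ 4 ^ n * n.factorial * Real.exp (s^2/4) := by
      rw [div_le_iff₀ (by positivity)] at key
      linarith [key]
    have h6 : |s| ^ n ≤ |s| ^ (2 * n) / |s| ^ n := by
      rw [le_div_iff₀ (by positivity), ← pow_add]
      exact pow_le_pow_right₀ hs1 (by omega)
    have hexp : Real.exp (-(s^2/4)) = (Real.exp (s^2/4))⁻¹ := by
      rw [← Real.exp_neg]
    rw [hexp, mul_inv_le_iff₀ hpos]
    calc |s| ^ n ≤ |s| ^ (2*n) / |s| ^ n := h6
      _ ≤ (4 ^ n * n.factorial * Real.exp (s^2/4)) / |s| ^ n := by gcongr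
      _ ≤ 4 ^ n * n.factorial * Real.exp (s^2/4) := by
          apply div_le_self (by positivity) (one_le_pow₀ hs1)

lemma integrable_pow_gauss (n : ℕ) : Integrable (fun s : ℝ => s ^ n * gss s) := by
  have hm : Integrable (fun s : ℝ => (4 ^ n * n.factorial : ℝ) * Real.exp (-(1/4) * s^2)) :=
    (integrable_exp_neg_mul_sq (by norm_num : (0:ℝ) < 1/4)).const_mul _
  apply hm.mono'
  · exact (continuous_pow n |>.mul (Real.continuous_exp.comp (by fun_prop))).aestronglyMeasurable
  · filter_upwards with s
    have hb := pow_mul_exp_bound n s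
    have hsplit : gss s = Real.exp (-(s^2/4)) * Real.exp (-(1/4) * s^2) := by
      rw [gss, ← Real.exp_add]; ring_nf
    rw [Real.norm_eq_abs, abs_mul, abs_pow, hsplit, abs_of_nonneg (by positivity :
      (0:ℝ) ≤ Real.exp (-(s^2/4)) * Real.exp (-(1/4) * s^2))]
    calc |s| ^ n * (Real.exp (-(s^2/4)) * Real.exp (-(1/4) * s^2))
        = (|s| ^ n * Real.exp (-(s^2/4))) * Real.exp (-(1/4) * s^2) := by ring
      _ ≤ (4 ^ n * n.factorial) * Real.exp (-(1/4) * s^2) := by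
          apply mul_le_mul_of_nonneg_right hb (Real.exp_pos _).le

lemma integrable_poly_gauss (p : Polynomial ℝ) :
    Integrable (fun s : ℝ => eval s p * gss s) := by
  have : (fun s : ℝ => eval s p * gss s) =
      fun s => ∑ i ∈ Finset.range (p.natDegree + 1), p.coeff i * (s ^ i * gss s) := by
    funext s
    rw [eval_eq_sum_range, Finset.sum_mul]
    exact Finset.sum_congr rfl fun i _ => by ring
  rw [this]
  exact integrable_finset_sum _ fun i _ => (integrable_pow_gauss i).const_mul _

lemma integrable_poly2_gauss (p r : Polynomial ℝ) :
    Integrable (fun s : ℝ => eval s p * (eval s r * gss s)) := by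
  have := integrable_poly_gauss (p * r)
  apply this.congr
  filter_upwards with s
  rw [eval_mul]; ring

lemma hasDerivAt_gss (s : ℝ) : HasDerivAt gss (-s * gss s) s := by
  have h1 : HasDerivAt (fun y : ℝ => -(y^2/2)) (-s) s := by
    have := (hasDerivAt_pow 2 s).div_const 2
    have h2 := this.neg
    refine h2.congr_deriv ?_
    simp
  have := h1.exp
  refine this.congr_deriv ?_
  rw [gss]; ring

lemma hasDerivAt_HpGauss (k : ℕ) (s : ℝ) :
    HasDerivAt (fun y => eval y (Hp k) * gss y) (-(eval s (Hp (k+1)) * gss s)) s := by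
  have h1 := (Hp k).hasDerivAt s
  have h2 := h1.mul (hasDerivAt_gss s)
  refine h2.congr_deriv ?_
  rw [Hp_succ, eval_sub, eval_mul, eval_X]
  ring

lemma parts (p : Polynomial ℝ) (k : ℕ) :
    ∫ s : ℝ, eval s p * (eval s (Hp (k+1)) * gss s) =
      ∫ s : ℝ, eval s (derivative p) * (eval s (Hp k) * gss s) := by
  have h := MeasureTheory.integral_mul_deriv_eq_deriv_mul_of_integrable
    (u := fun s : ℝ => eval s p) (v := fun y => eval y (Hp k) * gss y)
    (u' := fun s : ℝ => eval s (derivative p))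
    (v' := fun s : ℝ => -(eval s (Hp (k+1)) * gss s))
    (fun s _ => (p.hasDerivAt s)) (fun s _ => hasDerivAt_HpGauss k s)
    ?_ ?_ ?_
  · have h2 : ∫ s : ℝ, eval s p * -(eval s (Hp (k+1)) * gss s) =
        - ∫ s : ℝ, eval s p * (eval s (Hp (k+1)) * gss s) := by
      rw [← integral_neg]
      congr 1; funext s; ring
    rw [h2] at h
    exact neg_injective h
  · have he : ((fun s : ℝ => eval s p) * fun s : ℝ => -(eval s (Hp (k+1)) * gss s)) =
        fun s : ℝ => -(eval s p * (eval s (Hp (k+1)) * gss s)) := by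
      funext s; simp only [Pi.mul_apply]; ring
    rw [he]
    exact (integrable_poly2_gauss p (Hp (k+1))).neg
  · exact integrable_poly2_gauss (derivative p) (Hp k)
  · exact integrable_poly2_gauss p (Hp k)

lemma reduce (k : ℕ) : ∀ p : Polynomial ℝ,
    ∫ s : ℝ, eval s p * (eval s (Hp k) * gss s) =
      ∫ s : ℝ, eval s (derivative^[k] p) * gss s := by
  induction k with
  | zero => intro p; simp [Hp_zero]
  | succ k ih =>
    intro p
    rw [parts p k, ih (derivative p), ← Function.iterate_succ_apply]

lemma integral_gss : ∫ s : ℝ, gss s = Real.sqrt (2 * Real.pi) := by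
  have : (fun s : ℝ => gss s) = fun s : ℝ => Real.exp (-(1/2 : ℝ) * s^2) := by
    funext s; rw [gss]; ring_nf
  rw [this, integral_gaussian]
  rw [show Real.pi / (1/2 : ℝ) = 2 * Real.pi by ring]

lemma ortho (m n : ℕ) :
    ∫ s : ℝ, eval s (Hp m) * (eval s (Hp n) * gss s) =
      if m = n then (m.factorial : ℝ) * Real.sqrt (2 * Real.pi) else 0 := by
  rcases lt_trichotomy m n with h | h | h
  · rw [if_neg h.ne, reduce n (Hp m), iterate_derivative_Hp_lt h]
    simp
  · subst h
    rw [if_pos rfl, reduce m (Hp m), iterate_derivative_Hp_self]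
    have : (fun s : ℝ => eval s (((m.factorial : ℕ) : ℝ) • (1:Polynomial ℝ)) * gss s) =
        fun s : ℝ => (m.factorial : ℝ) * gss s := by
      funext s; simp
    rw [this, MeasureTheory.integral_const_mul, integral_gss]
  · rw [if_neg h.ne']
    have hc : (fun s : ℝ => eval s (Hp m) * (eval s (Hp n) * gss s)) =
        fun s : ℝ => eval s (Hp n) * (eval s (Hp m) * gss s) := by
      funext s; ring
    rw [hc, reduce m (Hp n), iterate_derivative_Hp_lt h]
    simp

lemma key_integral (q : ℕ) (b : ℝ) :
    ∫ s : ℝ, eval (s - b) (Hp q) * (eval (s + b) (Hp q) * gss s) =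
      Real.sqrt (2 * Real.pi) * (q.factorial * laguerre q (b^2)) := by
  classical
  set c : ℕ → ℕ → ℝ := fun i j => ((q.choose i : ℝ) * (q.choose j : ℝ)) * ((-b)^i * b^j)
    with hc
  have hpt : (fun s : ℝ => eval (s - b) (Hp q) * (eval (s + b) (Hp q) * gss s)) =
      fun s : ℝ => ∑ i ∈ Finset.range (q+1), ∑ j ∈ Finset.range (q+1),
        c i j * (eval s (Hp (q-i)) * (eval s (Hp (q-j)) * gss s)) := by
    funext s
    rw [show s - b = s + (-b) by ring, add_formula q s (-b), add_formula q s b,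
      Finset.sum_mul]
    refine Finset.sum_congr rfl fun i _ => ?_
    rw [Finset.sum_mul, Finset.mul_sum]
    refine Finset.sum_congr rfl fun j _ => ?_
    rw [hc]; ring
  rw [hpt]
  rw [integral_finset_sum _ (fun i _ => integrable_finset_sum _ (fun j _ =>
    (integrable_poly2_gauss (Hp (q-i)) (Hp (q-j))).const_mul _))]
  have hsum : ∀ i ∈ Finset.range (q+1),
      (∫ s : ℝ, ∑ j ∈ Finset.range (q+1),
        c i j * (eval s (Hp (q-i)) * (eval s (Hp (q-j)) * gss s))) =
      c i i * ((q-i).factorial * Real.sqrt (2 * Real.pi)) := by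
    intro i hi
    rw [integral_finset_sum _ (fun j _ =>
      (integrable_poly2_gauss (Hp (q-i)) (Hp (q-j))).const_mul _)]
    rw [Finset.sum_eq_single i]
    · rw [MeasureTheory.integral_const_mul, ortho, if_pos rfl]
    · intro j hj hne
      rw [MeasureTheory.integral_const_mul, ortho, if_neg, mul_zero]
      intro hcontra
      have hiq : i ≤ q := Nat.lt_succ_iff.mp (Finset.mem_range.mp hi)
      have hjq : j ≤ q := Nat.lt_succ_iff.mp (Finset.mem_range.mp hj)
      exact hne (by omega)
    · intro hcontra; exact absurd hi hcontra
  rw [Finset.sum_congr rfl hsum]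
  rw [laguerre, Finset.mul_sum, Finset.mul_sum]
  refine Finset.sum_congr rfl fun i hi => ?_
  have hiq : i ≤ q := Nat.lt_succ_iff.mp (Finset.mem_range.mp hi)
  have hkey : ((q.choose i : ℕ) : ℝ) * (i.factorial : ℝ) * ((q-i).factorial : ℝ)
      = (q.factorial : ℝ) := by
    exact_mod_cast congrArg (Nat.cast : ℕ → ℝ)
      (Nat.choose_mul_factorial_mul_factorial hiq)
  have hbb : (-b)^i * b^i = (-(b^2))^i := by
    rw [← mul_pow]; congr 1; ring
  have hfi : (i.factorial : ℝ) ≠ 0 := by exact_mod_cast i.factorial_ne_zero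
  rw [hc]
  simp only []
  rw [hbb, ← hkey]
  field_simp

noncomputable def uu (q : ℕ) (b s : ℝ) : ℝ :=
  eval (s - b) (Hp q) * Real.exp (-((s-b)^2/4))

lemma exp_quarter (y : ℝ) :
    Real.exp (-(y^2/4)) * Real.exp (-(y^2/4)) = gss y := by
  rw [gss, ← Real.exp_add]; congr 1; ring

lemma uu_sq (q : ℕ) (b : ℝ) : (fun s => uu q b s * uu q b s) =
    fun s => (fun y => eval y (Hp q) * (eval y (Hp q) * gss y)) (s - b) := by
  funext s
  simp only [uu]
  rw [← exp_quarter (s - b)]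
  ring

lemma integrable_uu_sq (q : ℕ) (b : ℝ) : Integrable (fun s => uu q b s * uu q b s) := by
  rw [uu_sq]
  exact (integrable_poly2_gauss (Hp q) (Hp q)).comp_sub_right b

lemma integral_uu_sq (q : ℕ) (b : ℝ) :
    ∫ s : ℝ, uu q b s * uu q b s = (q.factorial : ℝ) * Real.sqrt (2 * Real.pi) := by
  rw [uu_sq, MeasureTheory.integral_sub_right_eq_self
    (fun y => eval y (Hp q) * (eval y (Hp q) * gss y)) b, ortho, if_pos rfl]

lemma exp_cross (b s : ℝ) :
    Real.exp (-((s-b)^2/4)) * Real.exp (-((s+b)^2/4)) =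
      Real.exp (-(b^2)/2) * gss s := by
  rw [gss, ← Real.exp_add, ← Real.exp_add]; congr 1; ring

lemma uu_cross (q : ℕ) (b : ℝ) : (fun s => uu q b s * uu q (-b) s) =
    fun s => Real.exp (-(b^2)/2) * (eval (s - b) (Hp q) * (eval (s + b) (Hp q) * gss s)) := by
  funext s
  simp only [uu, sub_neg_eq_add]
  calc (eval (s - b) (Hp q) * Real.exp (-((s-b)^2/4))) *
        (eval (s + b) (Hp q) * Real.exp (-((s+b)^2/4)))
      = (eval (s - b) (Hp q) * eval (s + b) (Hp q)) *
        (Real.exp (-((s-b)^2/4)) * Real.exp (-((s+b)^2/4))) := by ring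
    _ = (eval (s - b) (Hp q) * eval (s + b) (Hp q)) * (Real.exp (-(b^2)/2) * gss s) := by
        rw [exp_cross]
    _ = _ := by ring

lemma integrable_uu_cross (q : ℕ) (b : ℝ) : Integrable (fun s => uu q b s * uu q (-b) s) := by
  rw [uu_cross]
  have h2 := (integrable_poly_gauss ((Hp q).comp (X - C b) * ((Hp q).comp (X + C b)))).const_mul
    (Real.exp (-(b^2)/2))
  apply h2.congr
  filter_upwards with s
  rw [eval_mul, eval_comp, eval_comp, eval_sub, eval_add, eval_X, eval_C]
  ring

lemma integral_uu_cross (q : ℕ) (b : ℝ) :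
    ∫ s : ℝ, uu q b s * uu q (-b) s =
      ((q.factorial : ℝ) * Real.sqrt (2 * Real.pi)) *
        (Real.exp (-(b^2)/2) * laguerre q (b^2)) := by
  rw [uu_cross, MeasureTheory.integral_const_mul, key_integral]
  ring

lemma laguerre_sq_bound (q : ℕ) (b : ℝ) :
    |Real.exp (-(b^2)/2) * laguerre q (b^2)| ≤ 1 := by
  set N : ℝ := (q.factorial : ℝ) * Real.sqrt (2 * Real.pi) with hN
  have hNpos : 0 < N := by
    apply mul_pos
    · exact_mod_cast q.factorial_pos
    · apply Real.sqrt_pos.mpr; positivity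
  set u : ℝ → ℝ := uu q b with hu
  set v : ℝ → ℝ := uu q (-b) with hv
  have hIu : Integrable (fun s => u s * u s) := integrable_uu_sq q b
  have hIv : Integrable (fun s => v s * v s) := integrable_uu_sq q (-b)
  have hIuv : Integrable (fun s => u s * v s) := integrable_uu_cross q b
  have hu2 : ∫ s : ℝ, u s * u s = N := integral_uu_sq q b
  have hv2 : ∫ s : ℝ, v s * v s = N := integral_uu_sq q (-b)
  have huv2 : ∫ s : ℝ, u s * v s = N * (Real.exp (-(b^2)/2) * laguerre q (b^2)) :=
    integral_uu_cross q b
  have hIsum : Integrable (fun s => u s * u s + v s * v s) := hIu.add hIv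
  have hI2uv : Integrable (fun s => 2 * (u s * v s)) := hIuv.const_mul 2
  have hminus : 0 ≤ ∫ s : ℝ, (u s - v s)^2 := integral_nonneg fun s => sq_nonneg _
  have hplus : 0 ≤ ∫ s : ℝ, (u s + v s)^2 := integral_nonneg fun s => sq_nonneg _
  have hexpand_m : ∫ s : ℝ, (u s - v s)^2 =
      ((∫ s : ℝ, u s * u s) + ∫ s : ℝ, v s * v s) - 2 * ∫ s : ℝ, u s * v s := by
    have hpt : (fun s => (u s - v s)^2) =
        fun s => (u s * u s + v s * v s) - 2 * (u s * v s) := by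
      funext s; ring
    rw [hpt, MeasureTheory.integral_sub hIsum hI2uv, MeasureTheory.integral_add hIu hIv,
      MeasureTheory.integral_const_mul]
  have hexpand_p : ∫ s : ℝ, (u s + v s)^2 =
      ((∫ s : ℝ, u s * u s) + ∫ s : ℝ, v s * v s) + 2 * ∫ s : ℝ, u s * v s := by
    have hpt : (fun s => (u s + v s)^2) =
        fun s => (u s * u s + v s * v s) + 2 * (u s * v s) := by
      funext s; ring
    rw [hpt, MeasureTheory.integral_add hIsum hI2uv, MeasureTheory.integral_add hIu hIv,
      MeasureTheory.integral_const_mul]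
  rw [hexpand_m, hu2, hv2, huv2] at hminus
  rw [hexpand_p, hu2, hv2, huv2] at hplus
  have habs : N * |Real.exp (-(b^2)/2) * laguerre q (b^2)| ≤ N := by
    rcases le_or_gt 0 (Real.exp (-(b^2)/2) * laguerre q (b^2)) with h | h
    · rw [abs_of_nonneg h]; nlinarith
    · rw [abs_of_neg h]; nlinarith
  have := le_of_mul_le_mul_left (habs.trans_eq (mul_one N).symm) hNpos
  exact this

/-- `|e^{-x/2} L_q(x)| ≤ 1` for all `q ∈ ℕ` and `x ≥ 0`. -/
theorem laguerre_exp_bound (q : ℕ) (x : ℝ) (hx : 0 ≤ x) :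
    |Real.exp (-x / 2) * laguerre q x| ≤ 1 := by
  have h := laguerre_sq_bound q (Real.sqrt x)
  rw [Real.sq_sqrt hx] at h
  rw [show -x / 2 = -(x)/2 by ring]
  exact h
end

section
/- For V(x) = ⟨x⟩^{-ρ} on ℝ² with ρ > 1, B₀ > 0, and k > 0, let V_B(x,y) = V(−B^{-1/2}y, −B^{-1/2}x) and let δ_k be the normalized arc-length measure on the circle of radius k centered at 0 in ℝ². Then sup_{z∈ℝ²} |(V_B * δ_k)(z)| ≤ C B^{1/2}/k, uniformly in B ≥ B₀ and k > 0, where C depends only on ρ. -/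
set_option maxHeartbeats 1000000
open Real MeasureTheory intervalIntegral

lemma lemA {t : ℝ} (ht : |t| ≤ π) : 2*t^2 ≤ π^2*(1 - Real.cos t) := by
  have hs0 : (0:ℝ) ≤ |t| := abs_nonneg t
  have hpi := Real.pi_pos
  set s := |t| with hsdef
  have hj := Real.mul_le_sin (x := s/2) (by linarith) (by linarith)
  have hj' : s ≤ π * Real.sin (s/2) := by
    have h1 : 2/π*(s/2) = s/π := by ring
    rw [h1, div_le_iff₀ hpi] at hj
    linarith [hj]
  have hc2 : Real.cos s = 1 - 2*Real.sin (s/2)^2 := by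
    have hcm := Real.cos_two_mul (s/2)
    have hsq := Real.sin_sq_add_cos_sq (s/2)
    have h2 : (2:ℝ)*(s/2) = s := by ring
    rw [h2] at hcm
    nlinarith
  have hcos : Real.cos s = Real.cos t := Real.cos_abs t
  have ht2 : t^2 = s^2 := (sq_abs t).symm
  rw [← hcos, hc2, ht2]
  nlinarith [mul_self_le_mul_self hs0 hj']

lemma lemB {a k t : ℝ} (ha : 0 ≤ a) (hk : 0 < k) (ht : |t| ≤ π) :
    k^2*t^2 ≤ 4*π^2*(a^2 + k^2 - 2*a*k*Real.cos t) := by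
  have hA := lemA ht
  have hpi := Real.pi_pos
  have ht2 : t^2 ≤ π^2 := by nlinarith [sq_abs t, abs_nonneg t]
  have hu : (0:ℝ) ≤ 1 - Real.cos t := by nlinarith [Real.cos_le_one t]
  rcases le_or_gt (k/2) a with h | h
  · nlinarith [sq_nonneg (a-k), mul_nonneg (mul_nonneg (sub_nonneg.2 h) hk.le) hu,
      mul_le_mul_of_nonneg_left hA (sq_nonneg k), mul_nonneg (sq_nonneg k) (sq_nonneg t)]
  · nlinarith [mul_nonneg (mul_nonneg ha hk.le) hu,
      mul_le_mul_of_nonneg_left ht2 (sq_nonneg k),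
      mul_nonneg (sq_nonneg π) (mul_pos (by linarith : (0:ℝ) < k/2 - a) (by linarith : (0:ℝ) < 3*k/2 - a)).le]

lemma lemM (ρ : ℝ) (hρ : 1 < ρ) : Integrable (fun u : ℝ => ((1:ℝ)+u^2)^(-(ρ/2))) := by
  have h := integrable_rpow_neg_one_add_norm_sq (E := ℝ) (μ := volume) (r := ρ)
    (by simpa using hρ)
  simpa [Real.norm_eq_abs, sq_abs, neg_div] using h

/-- for `V(x) = ⟨x⟩^{-ρ}`, `ρ > 1`, and
`V_B(x,y) = V(−B^{-1/2}y, −B^{-1/2}x)`, the circular average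
`(V_B * δ_k)(z) = (1/2π)∫₀^{2π} V_B(z − k(cos θ, sin θ)) dθ` satisfies
`sup_z |(V_B * δ_k)(z)| ≤ C B^{1/2}/k` uniformly in `B ≥ B₀` and `k > 0`,
with `C = C(ρ)`. -/
theorem circular_average_bound (ρ : ℝ) (hρ : 1 < ρ) :
    ∃ C : ℝ, 0 < C ∧
      ∀ B₀ : ℝ, 0 < B₀ → ∀ B : ℝ, B₀ ≤ B → ∀ k : ℝ, 0 < k → ∀ z : ℝ × ℝ,
        |(1 / (2 * π)) * ∫ θ in (0 : ℝ)..(2 * π),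
            (1 + (-(B ^ (-(1 / 2 : ℝ))) * (z.2 - k * Real.sin θ)) ^ 2
               + (-(B ^ (-(1 / 2 : ℝ))) * (z.1 - k * Real.cos θ)) ^ 2) ^ (-(ρ / 2))|
          ≤ C * B ^ ((1 : ℝ) / 2) / k := by
  have hpi := Real.pi_pos
  have hρ2 : -(ρ/2) ≤ 0 := by linarith
  set H : ℝ → ℝ := fun u => ((1:ℝ)+u^2)^(-(ρ/2)) with hHdef
  have hHint : Integrable H := lemM ρ hρ
  set M : ℝ := ∫ u : ℝ, H u with hMdef
  have hM0 : 0 ≤ M := integral_nonneg (fun u => by positivity)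
  refine ⟨M + 1, by linarith, ?_⟩
  intro B₀ hB₀ B hBB k hk z
  have hB : 0 < B := lt_of_lt_of_le hB₀ hBB
  set w : ℂ := ⟨z.1, z.2⟩ with hwdef
  set a : ℝ := ‖w‖ with hadef
  set φ : ℝ := Complex.arg w with hφdef
  have ha0 : 0 ≤ a := norm_nonneg w
  have hz1 : a * Real.cos φ = z.1 := Complex.norm_mul_cos_arg w
  have hz2 : a * Real.sin φ = z.2 := Complex.norm_mul_sin_arg w
  have hB2 : (B ^ (-(1/2:ℝ)))^2 = B⁻¹ := by
    rw [← Real.rpow_natCast (B ^ (-(1/2:ℝ))) 2, ← Real.rpow_mul hB.le]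
    norm_num [Real.rpow_neg_one]
  -- the shifted kernel
  set g : ℝ → ℝ := fun t => (1 + B⁻¹ * (a^2 + k^2 - 2*a*k*Real.cos t))^(-(ρ/2)) with hgdef
  have hbase_pos : ∀ t : ℝ, 0 < 1 + B⁻¹ * (a^2 + k^2 - 2*a*k*Real.cos t) := by
    intro t
    have h1 : 0 ≤ a^2 + k^2 - 2*a*k*Real.cos t := by
      nlinarith [Real.cos_le_one t, sq_nonneg (a-k), mul_nonneg ha0 hk.le]
    have h2 := mul_nonneg (inv_nonneg.2 hB.le) h1
    linarith
  have hgcont : Continuous g := by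
    apply Continuous.rpow_const
    · continuity
    · exact fun t => Or.inl (hbase_pos t).ne'
  have hgper : Function.Periodic g (2*π) := by
    intro t
    simp only [hgdef, Real.cos_add_two_pi]
  -- pointwise identification of the integrand
  have hEq : ∀ θ : ℝ,
      (1 + (-(B ^ (-(1/2:ℝ))) * (z.2 - k * Real.sin θ)) ^ 2
         + (-(B ^ (-(1/2:ℝ))) * (z.1 - k * Real.cos θ)) ^ 2) ^ (-(ρ/2)) = g (θ - φ) := by
    intro θ
    have hc := Real.cos_sub θ φ
    simp only [hgdef]
    congr 1
    rw [hc, ← hz1, ← hz2]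
    linear_combination ((a*Real.sin φ - k*Real.sin θ)^2 + (a*Real.cos φ - k*Real.cos θ)^2) * hB2
      + (B⁻¹*a^2) * (Real.sin_sq_add_cos_sq φ) + (B⁻¹*k^2) * (Real.sin_sq_add_cos_sq θ)
  -- rewrite the integral
  have hIeq : (∫ θ in (0:ℝ)..(2*π),
      (1 + (-(B ^ (-(1/2:ℝ))) * (z.2 - k * Real.sin θ)) ^ 2
         + (-(B ^ (-(1/2:ℝ))) * (z.1 - k * Real.cos θ)) ^ 2) ^ (-(ρ/2)))
      = ∫ t in (-π)..π, g t := by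
    rw [intervalIntegral.integral_congr (g := fun θ => g (θ - φ)) (fun θ _ => hEq θ)]
    rw [intervalIntegral.integral_comp_sub_right g φ]
    have := hgper.intervalIntegral_add_eq (0 - φ) (-π)
    rw [show (0:ℝ) - φ + 2*π = 2*π - φ by ring, show -π + 2*π = π by ring] at this
    exact this
  -- comparison function
  set c : ℝ := k^2/(4*π^2*B) with hcdef
  have hc0 : 0 ≤ c := div_nonneg (sq_nonneg k) (by positivity)
  set h : ℝ → ℝ := fun t => (1 + c*t^2)^(-(ρ/2)) with hhdef
  have hhcont : Continuous h := by
    apply Continuous.rpow_const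
    · continuity
    · intro t
      have : 0 < 1 + c*t^2 := by positivity
      exact Or.inl this.ne'
  have hgh : ∀ t ∈ Set.Icc (-π) π, g t ≤ h t := by
    intro t htmem
    have ht : |t| ≤ π := abs_le.2 ⟨htmem.1, htmem.2⟩
    have hBle := lemB ha0 hk ht
    have h1 : c * t^2 ≤ B⁻¹ * (a^2 + k^2 - 2*a*k*Real.cos t) := by
      have e : c*t^2 = (k^2*t^2) * (4*π^2*B)⁻¹ := by rw [hcdef]; ring
      have e2 : B⁻¹ * (a^2 + k^2 - 2*a*k*Real.cos t)
          = (4*π^2*(a^2 + k^2 - 2*a*k*Real.cos t)) * (4*π^2*B)⁻¹ := by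
        field_simp
      rw [e, e2]
      exact mul_le_mul_of_nonneg_right hBle (by positivity)
    simp only [hgdef, hhdef]
    exact Real.rpow_le_rpow_of_nonpos (by positivity) (by linarith) hρ2
  have hIbound : (∫ t in (-π)..π, g t) ≤ ∫ t in (-π)..π, h t := by
    apply intervalIntegral.integral_mono_on (by linarith) (hgcont.intervalIntegrable _ _)
      (hhcont.intervalIntegrable _ _) hgh
  -- substitution
  set m : ℝ := k/(2*π*Real.sqrt B) with hmdef
  have hsB : 0 < Real.sqrt B := Real.sqrt_pos.2 hB
  have hm : 0 < m := div_pos hk (by positivity)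
  have hm2 : m^2 = c := by
    rw [hmdef, hcdef, div_pow, mul_pow, mul_pow, Real.sq_sqrt hB.le]
    norm_num
  have hhH : ∀ t : ℝ, h t = H (m*t) := by
    intro t
    simp only [hhdef, hHdef, mul_pow, hm2]
  have hsub : (∫ t in (-π)..π, h t) = m⁻¹ * ∫ u in (m*(-π))..(m*π), H u := by
    rw [intervalIntegral.integral_congr (g := fun t => H (m*t)) (fun t _ => hhH t)]
    rw [intervalIntegral.integral_comp_mul_left H hm.ne']
    simp [smul_eq_mul]
  have hHle : (∫ u in (m*(-π))..(m*π), H u) ≤ M := by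
    have hle : m*(-π) ≤ m*π := by nlinarith
    rw [intervalIntegral.integral_of_le hle]
    exact setIntegral_le_integral hHint (Filter.Eventually.of_forall (fun u => by positivity))
  -- put it together
  have hI0 : 0 ≤ ∫ t in (-π)..π, g t := by
    apply intervalIntegral.integral_nonneg (by linarith)
    intro t _
    simp only [hgdef]
    exact Real.rpow_nonneg (hbase_pos t).le _
  have habs : |(1 / (2 * π)) * ∫ θ in (0:ℝ)..(2*π),
      (1 + (-(B ^ (-(1/2:ℝ))) * (z.2 - k * Real.sin θ)) ^ 2
         + (-(B ^ (-(1/2:ℝ))) * (z.1 - k * Real.cos θ)) ^ 2) ^ (-(ρ/2))|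
      = (1 / (2 * π)) * ∫ t in (-π)..π, g t := by
    rw [hIeq]
    exact abs_of_nonneg (mul_nonneg (by positivity) hI0)
  rw [habs]
  have hminv : m⁻¹ = 2*π*Real.sqrt B/k := by
    rw [hmdef, inv_div]
  have hchain : (1 / (2 * π)) * (∫ t in (-π)..π, g t) ≤ (1 / (2*π)) * (m⁻¹ * M) := by
    apply mul_le_mul_of_nonneg_left _ (by positivity)
    calc (∫ t in (-π)..π, g t) ≤ ∫ t in (-π)..π, h t := hIbound
      _ = m⁻¹ * ∫ u in (m*(-π))..(m*π), H u := hsub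
      _ ≤ m⁻¹ * M := by
          apply mul_le_mul_of_nonneg_left hHle (by positivity)
  refine hchain.trans ?_
  rw [hminv]
  rw [show ((1:ℝ)/2) = (1/2 : ℝ) from rfl, ← Real.sqrt_eq_rpow B]
  rw [show (1/(2*π)) * (2*π*Real.sqrt B/k * M) = Real.sqrt B * M / k by field_simp]
  apply div_le_div_of_nonneg_right ?_ hk.le
  · nlinarith [Real.sqrt_nonneg B]
end

section
/- For the radial function W_B(z) = (B^{-1}|z|² + 1)^{-ρ/2} on ℝ² with ρ > 1, and for r, k ≥ 0: (1/(2π)) ∫₀^{2π} (B^{-1}(k cos θ − r)² + B^{-1} k² sin²θ + 1)^{-ρ/2} dθ ≤ (2/π) ∫₀^∞ ((2θ/π)² B^{-1}k² + 1)^{-ρ/2} dθ = C_ρ B^{1/2}/k. -/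
open Real MeasureTheory intervalIntegral

lemma avg_aux_integrable (p : ℝ) (hp : 1 < p) (m : ℝ) (hm : 0 < m) :
    MeasureTheory.IntegrableOn (fun t : ℝ => ((m * t) ^ 2 + 1) ^ (-(p / 2)))
      (Set.Ioi (0 : ℝ)) := by
  have hcont : Continuous fun t : ℝ => ((m * t) ^ 2 + 1) ^ (-(p / 2)) := by
    apply Continuous.rpow_const (by continuity)
    intro x
    exact Or.inl (by positivity)
  rw [← Set.Ioc_union_Ioi_eq_Ioi (le_of_lt (inv_pos.2 hm))]
  apply MeasureTheory.IntegrableOn.union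
  · exact hcont.integrableOn_Ioc
  · have hInt : MeasureTheory.IntegrableOn (fun t : ℝ => m ^ (-p) * t ^ (-p))
        (Set.Ioi m⁻¹) :=
      (integrableOn_Ioi_rpow_of_lt (by linarith) (inv_pos.2 hm)).const_mul _
    apply hInt.mono' hcont.aestronglyMeasurable.restrict
    filter_upwards [ae_restrict_mem measurableSet_Ioi] with t ht
    have ht0 : 0 < t := lt_trans (inv_pos.2 hm) ht
    have hmt : 0 < m * t := mul_pos hm ht0
    rw [Real.norm_eq_abs, abs_of_nonneg (Real.rpow_nonneg (by positivity) _)]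
    have h1 : ((m * t) ^ 2 + 1) ^ (-(p / 2)) ≤ ((m * t) ^ 2) ^ (-(p / 2)) :=
      Real.rpow_le_rpow_of_nonpos (by positivity) (by linarith) (by linarith)
    have h2 : ((m * t) ^ 2 : ℝ) ^ (-(p / 2)) = (m * t) ^ (-p) := by
      rw [← Real.rpow_natCast (m * t) 2, ← Real.rpow_mul hmt.le]
      norm_num
      congr 1
      ring
    rw [h2, Real.mul_rpow hm.le ht0.le] at h1
    exact h1

/-- the key averaging estimate: for `ρ > 1`, `B > 0`, `r ≥ 0`, `k > 0`,
the circular average of the radial weight is bounded by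
`(2/π)∫₀^∞((2θ/π)² B^{-1}k² + 1)^{-ρ/2} dθ`, which equals `C_ρ B^{1/2}/k` with
`C_ρ = (2/π)∫₀^∞((2t/π)² + 1)^{-ρ/2} dt`. -/
theorem averaging_estimate (ρ : ℝ) (hρ : 1 < ρ) (B : ℝ) (hB : 0 < B)
    (r k : ℝ) (hr : 0 ≤ r) (hk : 0 < k) :
    ((1 / (2 * π)) * ∫ θ in (0 : ℝ)..(2 * π),
        (B⁻¹ * (k * Real.cos θ - r) ^ 2 + B⁻¹ * (k * Real.sin θ) ^ 2 + 1) ^ (-(ρ / 2)))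
      ≤ (2 / π) * ∫ θ in Set.Ioi (0 : ℝ), ((2 * θ / π) ^ 2 * B⁻¹ * k ^ 2 + 1) ^ (-(ρ / 2))
    ∧ ((2 / π) * ∫ θ in Set.Ioi (0 : ℝ), ((2 * θ / π) ^ 2 * B⁻¹ * k ^ 2 + 1) ^ (-(ρ / 2)))
      = ((2 / π) * ∫ t in Set.Ioi (0 : ℝ), ((2 * t / π) ^ 2 + 1) ^ (-(ρ / 2)))
          * B ^ ((1 : ℝ) / 2) / k := by
  have hb : (0 : ℝ) < B⁻¹ := inv_pos.2 hB
  have hπ : (0 : ℝ) < π := Real.pi_pos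
  have hsB : (0 : ℝ) < Real.sqrt B := Real.sqrt_pos.2 hB
  set c : ℝ := k / Real.sqrt B with hc_def
  have hc : 0 < c := div_pos hk hsB
  have hsq : Real.sqrt B ^ 2 = B := Real.sq_sqrt hB.le
  -- the three integrands
  set F : ℝ → ℝ := fun θ =>
    (B⁻¹ * (k * Real.cos θ - r) ^ 2 + B⁻¹ * (k * Real.sin θ) ^ 2 + 1) ^ (-(ρ / 2)) with hF
  set G : ℝ → ℝ := fun θ => (B⁻¹ * k ^ 2 * Real.sin θ ^ 2 + 1) ^ (-(ρ / 2)) with hG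
  set g : ℝ → ℝ := fun θ => ((2 * θ / π) ^ 2 * B⁻¹ * k ^ 2 + 1) ^ (-(ρ / 2)) with hg
  have hFc : Continuous F := by
    apply Continuous.rpow_const (by continuity)
    intro x; exact Or.inl (by positivity)
  have hGc : Continuous G := by
    apply Continuous.rpow_const (by continuity)
    intro x; exact Or.inl (by positivity)
  have hgc : Continuous g := by
    apply Continuous.rpow_const (by continuity)
    intro x; exact Or.inl (by positivity)
  -- integrability of g on Ioi 0
  have hgi : MeasureTheory.IntegrableOn g (Set.Ioi (0 : ℝ)) := by
    have := avg_aux_integrable ρ hρ (2 * c / π) (by positivity)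
    apply this.congr_fun _ measurableSet_Ioi
    intro t _
    show ((2 * c / π * t) ^ 2 + 1) ^ (-(ρ / 2)) = g t
    simp only [hg]
    have hbase : (2 * c / π * t) ^ 2 + 1 = (2 * t / π) ^ 2 * B⁻¹ * k ^ 2 + 1 := by
      rw [hc_def]
      field_simp
      linear_combination (-(4 * k ^ 2 * t ^ 2)) * hsq
    rw [hbase]
  have hgnn : ∀ x, 0 ≤ g x := fun x => Real.rpow_nonneg (by positivity) _
  constructor
  · -- inequality part
    have step1 : ∫ θ in (0 : ℝ)..(2 * π), F θ ≤ ∫ θ in (0 : ℝ)..(2 * π), G θ := by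
      apply intervalIntegral.integral_mono_on (by positivity)
        (hFc.intervalIntegrable _ _) (hGc.intervalIntegrable _ _)
      intro x _
      apply Real.rpow_le_rpow_of_nonpos (by positivity) _ (by linarith)
      have : B⁻¹ * (k * Real.sin x) ^ 2 = B⁻¹ * k ^ 2 * Real.sin x ^ 2 := by ring
      nlinarith [sq_nonneg (k * Real.cos x - r), hb.le]
    have step2 : ∫ θ in (0 : ℝ)..(2 * π), G θ = 2 * ∫ θ in (0 : ℝ)..π, G θ := by
      have h1 : ∫ θ in (0 : ℝ)..π, G (θ + π) = ∫ θ in (0 + π : ℝ)..(π + π), G θ :=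
        intervalIntegral.integral_comp_add_right G π
      have h2 : ∀ θ : ℝ, G (θ + π) = G θ := by
        intro θ; simp only [hG, Real.sin_add_pi, neg_sq]
      simp only [h2] at h1
      rw [show (0 : ℝ) + π = π by ring, show π + π = 2 * π by ring] at h1
      rw [← intervalIntegral.integral_add_adjacent_intervals
        (hGc.intervalIntegrable 0 π) (hGc.intervalIntegrable π (2 * π)), ← h1]
      ring
    have step3 : ∫ θ in (0 : ℝ)..π, G θ = 2 * ∫ θ in (0 : ℝ)..(π / 2), G θ := by
      have h1 : ∫ θ in (0 : ℝ)..(π / 2), G (π - θ) = ∫ θ in (π - π / 2 : ℝ)..(π - 0), G θ :=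
        intervalIntegral.integral_comp_sub_left G π
      have h2 : ∀ θ : ℝ, G (π - θ) = G θ := by
        intro θ; simp only [hG, Real.sin_pi_sub]
      simp only [h2] at h1
      rw [show π - π / 2 = π / 2 by ring, show π - (0 : ℝ) = π by ring] at h1
      rw [← intervalIntegral.integral_add_adjacent_intervals
        (hGc.intervalIntegrable 0 (π / 2)) (hGc.intervalIntegrable (π / 2) π), ← h1]
      ring
    have step4 : ∫ θ in (0 : ℝ)..(π / 2), G θ ≤ ∫ θ in (0 : ℝ)..(π / 2), g θ := by
      apply intervalIntegral.integral_mono_on (by positivity)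
        (hGc.intervalIntegrable _ _) (hgc.intervalIntegrable _ _)
      intro x hx
      apply Real.rpow_le_rpow_of_nonpos (by positivity) _ (by linarith)
      have hsin : 2 * x / π ≤ Real.sin x := by
        have h' : 2 * x / π = 2 / π * x := by ring
        rw [h']
        exact Real.mul_le_sin hx.1 hx.2
      have hx0 : 0 ≤ 2 * x / π := div_nonneg (by linarith [hx.1]) hπ.le
      have : (2 * x / π) ^ 2 ≤ Real.sin x ^ 2 := by nlinarith
      nlinarith [mul_pos hb (mul_pos hk hk)]
    have step5 : ∫ θ in (0 : ℝ)..(π / 2), g θ ≤ ∫ θ in Set.Ioi (0 : ℝ), g θ := by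
      rw [intervalIntegral.integral_of_le (by positivity)]
      apply MeasureTheory.setIntegral_mono_set hgi
      · exact Filter.Eventually.of_forall fun x => hgnn x
      · exact (Set.Ioc_subset_Ioi_self).eventuallyLE
    have h2π : (0:ℝ) < 1 / (2 * π) := by positivity
    calc (1 / (2 * π)) * ∫ θ in (0 : ℝ)..(2 * π), F θ
        ≤ (1 / (2 * π)) * (2 * (2 * ∫ θ in (0 : ℝ)..(π / 2), G θ)) := by
          rw [← step3, ← step2]; exact mul_le_mul_of_nonneg_left step1 h2π.le
      _ = (2 / π) * ∫ θ in (0 : ℝ)..(π / 2), G θ := by field_simp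
      _ ≤ (2 / π) * ∫ θ in Set.Ioi (0 : ℝ), g θ := by
          apply mul_le_mul_of_nonneg_left _ (by positivity)
          exact step4.trans step5
  · -- equality part
    have key : ∫ θ in Set.Ioi (0 : ℝ), g θ
        = c⁻¹ * ∫ t in Set.Ioi (0 : ℝ), ((2 * t / π) ^ 2 + 1) ^ (-(ρ / 2)) := by
      have := MeasureTheory.integral_comp_mul_left_Ioi
        (fun t : ℝ => ((2 * t / π) ^ 2 + 1) ^ (-(ρ / 2))) 0 hc
      rw [mul_zero] at this
      have hcongr : ∫ θ in Set.Ioi (0 : ℝ), g θ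
          = ∫ x in Set.Ioi (0 : ℝ), ((2 * (c * x) / π) ^ 2 + 1) ^ (-(ρ / 2)) := by
        apply MeasureTheory.setIntegral_congr_fun measurableSet_Ioi
        intro t _
        simp only [hg]
        have hbase : (2 * t / π) ^ 2 * B⁻¹ * k ^ 2 + 1 = (2 * (c * t) / π) ^ 2 + 1 := by
          rw [hc_def]
          field_simp
          linear_combination (4 * k ^ 2 * t ^ 2) * hsq
        rw [hbase]
      rw [hcongr]
      simpa [smul_eq_mul] using this
    rw [key]
    have hcinv : c⁻¹ = B ^ ((1:ℝ)/2) / k := by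
      rw [hc_def, ← Real.sqrt_eq_rpow]
      field_simp
    rw [hcinv]
    ring
end
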